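/- Let ν be a signed measure and μ a positive measure with |ν| ≤ μ, both supported outside an interval J. Let J₋, J₊ be the left and right halves of J and w a weight with w(J₋), w(J₊) > 0. Then |⟨Hν, h_J^w⟩_w| ≤ ⟨Hμ, h_J^w⟩_w, where Hν(x) = ∫ (x−y)^{-1} dν(y) and h_J^w is the weighted Haar function with the sign convention h_J^w = c(𝟙_{J₋}/w(J₋) − 𝟙_{J₊}/w(J₊)), c = sqrt(w(J₋)w(J₊)/w(J)). -/

import Mathlib

open MeasureTheory Set

/-- The Hilbert transform of a (positive) measure, `Hμ(x) = ∫ (x−y)⁻¹ dμ(y)`. -/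
noncomputable def Htr (μ : Measure ℝ) (x : ℝ) : ℝ := ∫ y, (x - y)⁻¹ ∂μ

/-- The weighted Haar function on `J = [a,b)` with midpoint `m`, with the sign convention
`h_J^w = c (𝟙_{J₋}/w(J₋) − 𝟙_{J₊}/w(J₊))`, `c = sqrt(w(J₋)w(J₊)/w(J))`. -/
noncomputable def haarFn (w : Measure ℝ) (a m b : ℝ) : ℝ → ℝ := fun x =>
  Real.sqrt (((w (Ico a m)).toReal * (w (Ico m b)).toReal) / (w (Ico a b)).toReal) *
    ((Ico a m).indicator (fun _ => ((w (Ico a m)).toReal)⁻¹) x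
      - (Ico m b).indicator (fun _ => ((w (Ico m b)).toReal)⁻¹) x)

/-- If `τ ≤ σ` and `σ` vanishes on `Icc a b`, then `Htr σ − Htr τ` is antitone on `Ico a b`. -/
lemma antitone_Htr_sub (σ τ : Measure ℝ) (a b : ℝ) (hle : τ ≤ σ) (hnull : σ (Icc a b) = 0)
    (hker : ∀ x ∈ Ico a b, Integrable (fun y => (x - y)⁻¹) σ) :
    ∀ x ∈ Ico a b, ∀ x' ∈ Ico a b, x ≤ x' →
      Htr σ x' - Htr τ x' ≤ Htr σ x - Htr τ x := by
  intro x hx x' hx' hxx'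
  set d : ℝ → ℝ := fun y => (x - y)⁻¹ - (x' - y)⁻¹ with hd
  have hkx := hker x hx
  have hkx' := hker x' hx'
  have hkxτ := hkx.mono_measure hle
  have hkx'τ := hkx'.mono_measure hle
  have hdσ : Integrable d σ := hkx.sub hkx'
  -- `d ≥ 0` off `Icc a b`
  have hdpos : ∀ y, y ∉ Icc a b → 0 ≤ d y := by
    intro y hy
    simp only [mem_Icc, not_and_or, not_le] at hy
    rcases hy with hy | hy
    · -- y < a
      have h1 : 0 < x - y := by linarith [hx.1]
      have h2 : x - y ≤ x' - y := by linarith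
      have : (x' - y)⁻¹ ≤ (x - y)⁻¹ := by gcongr
      simpa [hd] using sub_nonneg.mpr this
    · -- b < y
      have h1 : x' - y < 0 := by linarith [hx'.2]
      have h2 : x - y < 0 := by linarith [hx.2]
      have : (x' - y)⁻¹ ≤ (x - y)⁻¹ := (inv_le_inv_of_neg h1 h2).mpr (by linarith)
      simpa [hd] using sub_nonneg.mpr this
  have haeσ : 0 ≤ᶠ[ae σ] d := by
    rw [Filter.EventuallyLE, ae_iff]
    refine measure_mono_null (fun y hy => ?_) hnull
    by_contra hyn
    exact hy (by simpa using hdpos y hyn)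
  have e1 : Htr σ x - Htr σ x' = ∫ y, d y ∂σ := (integral_sub hkx hkx').symm
  have e2 : Htr τ x - Htr τ x' = ∫ y, d y ∂τ := (integral_sub hkxτ hkx'τ).symm
  have := integral_mono_measure hle haeσ hdσ (f := d)
  linarith

/-- Core positivity: the pairing of a function antitone on `J` with the Haar function
is nonnegative. -/
lemma haar_pairing_nonneg (w : Measure ℝ) (a m b : ℝ) (ham : a < m) (hmb : m < b)
    (hm0 : w (Ico a m) ≠ 0) (hmT : w (Ico a m) ≠ ⊤)
    (hp0 : w (Ico m b) ≠ 0) (hpT : w (Ico m b) ≠ ⊤)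
    (g : ℝ → ℝ)
    (hg : ∀ x ∈ Ico a b, ∀ x' ∈ Ico a b, x ≤ x' → g x' ≤ g x)
    (hint : Integrable (fun x => g x * haarFn w a m b x) w) :
    0 ≤ ∫ x, g x * haarFn w a m b x ∂w := by
  set wm := (w (Ico a m)).toReal with hwm'
  set wp := (w (Ico m b)).toReal with hwp'
  have hwm : 0 < wm := ENNReal.toReal_pos hm0 hmT
  have hwp : 0 < wp := ENNReal.toReal_pos hp0 hpT
  have hJ : w (Ico a b) = w (Ico a m) + w (Ico m b) := by
    rw [← Ico_union_Ico_eq_Ico ham.le hmb.le,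
      measure_union (Ico_disjoint_Ico_same) measurableSet_Ico]
  have hJT : w (Ico a b) ≠ ⊤ := by
    rw [hJ]; exact ENNReal.add_ne_top.mpr ⟨hmT, hpT⟩
  have hJ0 : w (Ico a b) ≠ 0 := by
    rw [hJ]; intro h; exact hm0 (by simpa using (add_eq_zero.mp h).1)
  have hwJ : 0 < (w (Ico a b)).toReal := ENNReal.toReal_pos hJ0 hJT
  set c := Real.sqrt ((wm * wp) / (w (Ico a b)).toReal) with hc'
  have hc : 0 < c := Real.sqrt_pos.mpr (by positivity)
  -- pointwise values of the Haar function
  have hxl : ∀ x ∈ Ico a m, haarFn w a m b x = c * wm⁻¹ := by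
    intro x hx
    have hnot : x ∉ Ico m b := fun h => absurd hx.2 (not_lt.mpr h.1)
    unfold haarFn
    rw [indicator_of_mem hx, indicator_of_notMem hnot]
    ring
  have hxr : ∀ x ∈ Ico m b, haarFn w a m b x = -(c * wp⁻¹) := by
    intro x hx
    have hnot : x ∉ Ico a m := fun h => absurd hx.1 (not_le.mpr h.2)
    unfold haarFn
    rw [indicator_of_mem hx, indicator_of_notMem hnot]
    ring
  have hx0 : ∀ x, x ∉ Ico a m → x ∉ Ico m b → haarFn w a m b x = 0 := by
    intro x h1 h2
    unfold haarFn
    rw [indicator_of_notMem h1, indicator_of_notMem h2]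
    ring
  have hfun : (fun x => g x * haarFn w a m b x)
      = fun x => (Ico a m).indicator (fun x => c * wm⁻¹ * g x) x
        - (Ico m b).indicator (fun x => c * wp⁻¹ * g x) x := by
    funext x
    by_cases h1 : x ∈ Ico a m
    · have hnot : x ∉ Ico m b := fun h => absurd h1.2 (not_lt.mpr h.1)
      rw [indicator_of_mem h1, indicator_of_notMem hnot, hxl x h1]; ring
    · by_cases h2 : x ∈ Ico m b
      · rw [indicator_of_mem h2, indicator_of_notMem h1, hxr x h2]; ring
      · rw [indicator_of_notMem h1, indicator_of_notMem h2, hx0 x h1 h2]; ring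
  -- integrability of the two pieces
  have I1 : Integrable ((Ico a m).indicator (fun x => c * wm⁻¹ * g x)) w := by
    have := hint.indicator (measurableSet_Ico (a := a) (b := m))
    refine this.congr (Filter.Eventually.of_forall fun x => ?_)
    by_cases h1 : x ∈ Ico a m
    · rw [indicator_of_mem h1, indicator_of_mem h1, hxl x h1]; ring
    · rw [indicator_of_notMem h1, indicator_of_notMem h1]
  have I2 : Integrable ((Ico m b).indicator (fun x => c * wp⁻¹ * g x)) w := by
    have := (hint.indicator (measurableSet_Ico (a := m) (b := b))).neg
    refine this.congr (Filter.Eventually.of_forall fun x => ?_)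
    by_cases h2 : x ∈ Ico m b
    · simp only [Pi.neg_apply, indicator_of_mem h2, hxr x h2]; ring
    · simp only [Pi.neg_apply, indicator_of_notMem h2, neg_zero]
  have Ig1 : IntegrableOn g (Ico a m) w := by
    have := ((integrable_indicator_iff measurableSet_Ico).mp I1).const_mul (c * wm⁻¹)⁻¹
    refine this.congr (Filter.Eventually.of_forall fun x => ?_)
    field_simp
  have Ig2 : IntegrableOn g (Ico m b) w := by
    have := ((integrable_indicator_iff measurableSet_Ico).mp I2).const_mul (c * wp⁻¹)⁻¹
    refine this.congr (Filter.Eventually.of_forall fun x => ?_)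
    field_simp
  -- compute the integral
  have hint_eq : ∫ x, g x * haarFn w a m b x ∂w
      = c * wm⁻¹ * ∫ x in Ico a m, g x ∂w - c * wp⁻¹ * ∫ x in Ico m b, g x ∂w := by
    rw [hfun, integral_sub I1 I2, integral_indicator measurableSet_Ico,
      integral_indicator measurableSet_Ico, integral_const_mul, integral_const_mul]
  -- compare averages via the value at the midpoint
  have hmJ : m ∈ Ico a b := ⟨ham.le, hmb⟩
  have h1 : g m * wm ≤ ∫ x in Ico a m, g x ∂w := by
    have := setIntegral_mono_on (f := fun _ => g m) (g := g)
      ((integrableOn_const_iff (C := g m)).mpr (Or.inr (lt_top_iff_ne_top.mpr hmT))) Ig1 measurableSet_Ico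
      (fun x hx => hg x ⟨hx.1, hx.2.trans hmb⟩ m hmJ hx.2.le)
    simpa [mul_comm, measureReal_def] using this
  have h2 : ∫ x in Ico m b, g x ∂w ≤ g m * wp := by
    have := setIntegral_mono_on (f := g) (g := fun _ => g m)
      Ig2 ((integrableOn_const_iff (C := g m)).mpr (Or.inr (lt_top_iff_ne_top.mpr hpT))) measurableSet_Ico
      (fun x hx => hg m hmJ x ⟨ham.le.trans hx.1, hx.2⟩ hx.1)
    simpa [mul_comm, measureReal_def] using this
  rw [hint_eq]
  have k1 : c * g m ≤ c * wm⁻¹ * ∫ x in Ico a m, g x ∂w := by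
    have := mul_le_mul_of_nonneg_left h1 (le_of_lt (mul_pos hc (inv_pos.mpr hwm)))
    calc c * g m = c * wm⁻¹ * (g m * wm) := by field_simp
    _ ≤ _ := this
  have k2 : c * wp⁻¹ * ∫ x in Ico m b, g x ∂w ≤ c * g m := by
    have := mul_le_mul_of_nonneg_left h2 (le_of_lt (mul_pos hc (inv_pos.mpr hwp)))
    calc c * wp⁻¹ * ∫ x in Ico m b, g x ∂w ≤ c * wp⁻¹ * (g m * wp) := this
    _ = c * g m := by field_simp
  linarith

/-- Monotonicity: if the signed measure `ν = νp − νm` satisfies `|ν| ≤ μ` and both are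
supported outside `J`, then `|⟨Hν, h_J^w⟩_w| ≤ ⟨Hμ, h_J^w⟩_w`. -/
theorem stmt4 (νp νm μ w : Measure ℝ) (a m b : ℝ) (hab : a < b) (hm : m = (a + b) / 2)
    (hdom : νp + νm ≤ μ) (hsupp : μ (Icc a b) = 0)
    (hm0 : w (Ico a m) ≠ 0) (hmT : w (Ico a m) ≠ ⊤)
    (hp0 : w (Ico m b) ≠ 0) (hpT : w (Ico m b) ≠ ⊤)
    (hker : ∀ x ∈ Ico a b, Integrable (fun y => (x - y)⁻¹) μ)
    (hint1 : Integrable (fun x => (Htr νp x - Htr νm x) * haarFn w a m b x) w)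
    (hint2 : Integrable (fun x => Htr μ x * haarFn w a m b x) w) :
    |∫ x, (Htr νp x - Htr νm x) * haarFn w a m b x ∂w|
      ≤ ∫ x, Htr μ x * haarFn w a m b x ∂w := by
  have ham : a < m := by rw [hm]; linarith
  have hmb : m < b := by rw [hm]; linarith
  have hνp_le : νp ≤ μ := le_trans (Measure.le_add_right le_rfl) hdom
  have hνm_le : νm ≤ μ := le_trans (by simpa [add_comm] using
    (Measure.le_add_right (le_refl νm) (ν' := νp))) hdom
  have hkerp : ∀ x ∈ Ico a b, Integrable (fun y => (x - y)⁻¹) νp :=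
    fun x hx => (hker x hx).mono_measure hνp_le
  have hkerm : ∀ x ∈ Ico a b, Integrable (fun y => (x - y)⁻¹) νm :=
    fun x hx => (hker x hx).mono_measure hνm_le
  have hsuppm : νm (Icc a b) = 0 := le_antisymm (hsupp ▸ hνm_le (Icc a b)) zero_le
  have hsuppp : νp (Icc a b) = 0 := le_antisymm (hsupp ▸ hνp_le (Icc a b)) zero_le
  -- haarFn vanishes off Ico a b
  have hhaar0 : ∀ x, x ∉ Ico a b → haarFn w a m b x = 0 := by
    intro x hx
    have h1 : x ∉ Ico a m := fun h => hx ⟨h.1, h.2.trans hmb⟩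
    have h2 : x ∉ Ico m b := fun h => hx ⟨ham.le.trans h.1, h.2⟩
    unfold haarFn
    rw [indicator_of_notMem h1, indicator_of_notMem h2]
    ring
  -- First direction: 0 ≤ ∫ (Hμ − Hν) h
  have dir1 : 0 ≤ ∫ x, (Htr μ x - (Htr νp x - Htr νm x)) * haarFn w a m b x ∂w := by
    set g : ℝ → ℝ := fun x => Htr (μ + νm) x - Htr νp x with hg'
    have hlep : νp ≤ μ + νm := le_trans hνp_le (Measure.le_add_right le_rfl)
    have hnull : (μ + νm) (Icc a b) = 0 := by
      simp [Measure.add_apply, hsupp, hsuppm]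
    have hkerσ : ∀ x ∈ Ico a b, Integrable (fun y => (x - y)⁻¹) (μ + νm) :=
      fun x hx => (hker x hx).add_measure (hkerm x hx)
    have hanti := antitone_Htr_sub (μ + νm) νp a b hlep hnull hkerσ
    have heq : ∀ x, (Htr μ x - (Htr νp x - Htr νm x)) * haarFn w a m b x
        = g x * haarFn w a m b x := by
      intro x
      by_cases hx : x ∈ Ico a b
      · have : Htr (μ + νm) x = Htr μ x + Htr νm x :=
          integral_add_measure (hker x hx) (hkerm x hx)
        simp only [hg', this]; ring
      · rw [hhaar0 x hx]; ring
    have hint' : Integrable (fun x => g x * haarFn w a m b x) w := by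
      refine ((hint2.sub hint1).congr (Filter.Eventually.of_forall fun x => ?_))
      simp only [Pi.sub_apply]
      rw [← heq x]; ring
    calc (0:ℝ) ≤ ∫ x, g x * haarFn w a m b x ∂w :=
          haar_pairing_nonneg w a m b ham hmb hm0 hmT hp0 hpT g hanti hint'
    _ = _ := by rw [integral_congr_ae (Filter.Eventually.of_forall fun x => (heq x).symm)]
  -- Second direction: 0 ≤ ∫ (Hμ + Hν) h
  have dir2 : 0 ≤ ∫ x, (Htr μ x + (Htr νp x - Htr νm x)) * haarFn w a m b x ∂w := by
    set g : ℝ → ℝ := fun x => Htr (μ + νp) x - Htr νm x with hg'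
    have hlem : νm ≤ μ + νp := le_trans hνm_le (Measure.le_add_right le_rfl)
    have hnull : (μ + νp) (Icc a b) = 0 := by
      simp [Measure.add_apply, hsupp, hsuppp]
    have hkerσ : ∀ x ∈ Ico a b, Integrable (fun y => (x - y)⁻¹) (μ + νp) :=
      fun x hx => (hker x hx).add_measure (hkerp x hx)
    have hanti := antitone_Htr_sub (μ + νp) νm a b hlem hnull hkerσ
    have heq : ∀ x, (Htr μ x + (Htr νp x - Htr νm x)) * haarFn w a m b x
        = g x * haarFn w a m b x := by
      intro x
      by_cases hx : x ∈ Ico a b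
      · have : Htr (μ + νp) x = Htr μ x + Htr νp x :=
          integral_add_measure (hker x hx) (hkerp x hx)
        simp only [hg', this]; ring
      · rw [hhaar0 x hx]; ring
    have hint' : Integrable (fun x => g x * haarFn w a m b x) w := by
      refine ((hint2.add hint1).congr (Filter.Eventually.of_forall fun x => ?_))
      simp only [Pi.add_apply]
      rw [← heq x]; ring
    calc (0:ℝ) ≤ ∫ x, g x * haarFn w a m b x ∂w :=
          haar_pairing_nonneg w a m b ham hmb hm0 hmT hp0 hpT g hanti hint'
    _ = _ := by rw [integral_congr_ae (Filter.Eventually.of_forall fun x => (heq x).symm)]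
  -- combine
  have e1 : ∫ x, (Htr μ x - (Htr νp x - Htr νm x)) * haarFn w a m b x ∂w
      = (∫ x, Htr μ x * haarFn w a m b x ∂w)
        - ∫ x, (Htr νp x - Htr νm x) * haarFn w a m b x ∂w := by
    rw [← integral_sub hint2 hint1]
    exact integral_congr_ae (Filter.Eventually.of_forall fun x => by simp only [Pi.sub_apply, Pi.add_apply]; ring)
  have e2 : ∫ x, (Htr μ x + (Htr νp x - Htr νm x)) * haarFn w a m b x ∂w
      = (∫ x, Htr μ x * haarFn w a m b x ∂w)
        + ∫ x, (Htr νp x - Htr νm x) * haarFn w a m b x ∂w := by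
    rw [← integral_add hint2 hint1]
    exact integral_congr_ae (Filter.Eventually.of_forall fun x => by simp only [Pi.sub_apply, Pi.add_apply]; ring)
  rw [e1] at dir1
  rw [e2] at dir2
  rw [abs_le]
  constructor <;> linarith
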